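/- Let S be a semigroup in which every element is completely regular (i.e., lies in a subgroup of S, equivalently for every a there is a commuting inverse a⁻¹ with aa⁻¹a = a and aa⁻¹ = a⁻¹a). Then the natural conjugacy ∼ₙ coincides with primary conjugacy ∼ₚ, where a ∼ₚ b iff there exist u, v ∈ S¹ with a = uv and b = vu. -/

import Mathlib

/-- Natural conjugacy. -/
def NatConj {S : Type*} [Semigroup S] (a b : S) : Prop :=
  ∃ g h : WithOne S,
    (a : WithOne S) * g = g * (b : WithOne S) ∧
    (b : WithOne S) * h = h * (a : WithOne S) ∧
    h * (a : WithOne S) * g = (b : WithOne S) ∧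
    g * (b : WithOne S) * h = (a : WithOne S)

/-- Primary conjugacy: `a ∼ₚ b` iff `a = uv` and `b = vu` for some `u, v ∈ S¹`. -/
def PrimConj {S : Type*} [Semigroup S] (a b : S) : Prop :=
  ∃ u v : WithOne S, (a : WithOne S) = u * v ∧ (b : WithOne S) = v * u

section CruxAux
variable {S : Type*} [Semigroup S] [Inv S]

lemma crux_aux (hinv1 : ∀ a : S, a * a⁻¹ * a = a)
    (hinv2 : ∀ a : S, a⁻¹ * a * a⁻¹ = a⁻¹)
    (hcomm : ∀ a : S, a * a⁻¹ = a⁻¹ * a)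
    (u v : S) : v * ((u*v) * (u*v)⁻¹) * u = v * u := by
  set a := u * v with ha
  set b := v * u with hb
  have A1 : a * a⁻¹ * a = a := hinv1 a
  have A2 : a⁻¹ * a * a⁻¹ = a⁻¹ := hinv2 a
  have A3 : a * a⁻¹ = a⁻¹ * a := hcomm a
  have B1 : b * b⁻¹ * b = b := hinv1 b
  have B2 : b⁻¹ * b * b⁻¹ = b⁻¹ := hinv2 b
  have B3 : b * b⁻¹ = b⁻¹ * b := hcomm b
  have aaA : a * a * a⁻¹ = a := by rw [mul_assoc, A3, ← mul_assoc, A1]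
  have Aaa : a⁻¹ * a * a = a := by rw [← A3, A1]
  have aAA : a * a⁻¹ * a⁻¹ = a⁻¹ := by rw [A3, A2]
  have AAa : a⁻¹ * a⁻¹ * a = a⁻¹ := by rw [mul_assoc, ← A3, ← mul_assoc, A2]
  have BBb : b⁻¹ * b⁻¹ * b = b⁻¹ := by rw [mul_assoc, ← B3, ← mul_assoc, B2]
  have Bbb : b⁻¹ * b * b = b := by rw [← B3, B1]
  set c := v * (a * a⁻¹) * u with hc
  set t := v * a⁻¹ * u with ht
  set y := v * (a⁻¹ * a⁻¹) * u with hy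
  -- e1 : b * c = b * b
  have e1 : b * c = b * b := by
    calc b * c = v * (u * v * (a * a⁻¹)) * u := by
          simp only [hb, hc, mul_assoc]
      _ = v * (a * a * a⁻¹) * u := by rw [← ha]; simp only [mul_assoc]
      _ = v * a * u := by rw [aaA]
      _ = b * b := by simp only [hb, ha, mul_assoc]
  -- e2 : b⁻¹ * c = b⁻¹ * b
  have e2 : b⁻¹ * c = b⁻¹ * b := by
    calc b⁻¹ * c = b⁻¹ * b⁻¹ * b * c := by rw [BBb]
      _ = b⁻¹ * b⁻¹ * (b * c) := by rw [mul_assoc]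
      _ = b⁻¹ * b⁻¹ * (b * b) := by rw [e1]
      _ = b⁻¹ * b⁻¹ * b * b := by simp only [mul_assoc]
      _ = b⁻¹ * b := by rw [BBb]
  -- e3 : c * t = c
  have e3 : c * t = c := by
    calc c * t = v * (a * a⁻¹ * (u * v * a⁻¹)) * u := by
          simp only [hc, ht, mul_assoc]
      _ = v * (a * a⁻¹ * (a * a⁻¹)) * u := by rw [← ha]
      _ = v * (a * a⁻¹ * a * a⁻¹) * u := by rw [← mul_assoc (a * a⁻¹)]
      _ = v * (a * a⁻¹) * u := by rw [A1]
  -- e4 : b * y = t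
  have e4 : b * y = t := by
    calc b * y = v * (u * v * (a⁻¹ * a⁻¹)) * u := by
          simp only [hb, hy, mul_assoc]
      _ = v * (a * a⁻¹ * a⁻¹) * u := by rw [← ha]; simp only [mul_assoc]
      _ = t := by rw [aAA, ht]
  -- e5 : t * c = c
  have e5 : t * c = c := by
    calc t * c = v * (a⁻¹ * (u * v * (a * a⁻¹))) * u := by
          simp only [ht, hc, mul_assoc]
      _ = v * (a⁻¹ * (a * (a * a⁻¹))) * u := by rw [← ha]
      _ = v * (a⁻¹ * a * a * a⁻¹) * u := by simp only [mul_assoc]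
      _ = v * (a * a⁻¹) * u := by rw [Aaa]
  -- e6 : (b⁻¹*b)*t = b⁻¹*b
  have e6 : b⁻¹ * b * t = b⁻¹ * b := by
    calc b⁻¹ * b * t = b⁻¹ * c * t := by rw [e2]
      _ = b⁻¹ * (c * t) := by rw [mul_assoc]
      _ = b⁻¹ * c := by rw [e3]
      _ = b⁻¹ * b := e2
  -- e7 : (b⁻¹*b)*t = t
  have e7 : b⁻¹ * b * t = t := by
    calc b⁻¹ * b * t = b⁻¹ * b * (b * y) := by rw [e4]
      _ = b⁻¹ * b * b * y := by simp only [mul_assoc]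
      _ = b * y := by rw [Bbb]
      _ = t := e4
  have e8 : t = b⁻¹ * b := by rw [← e7, e6]
  -- conclude
  calc v * (a * a⁻¹) * u = c := rfl
    _ = t * c := (e5).symm
    _ = b⁻¹ * b * c := by rw [e8]
    _ = b⁻¹ * (b * c) := by rw [mul_assoc]
    _ = b⁻¹ * (b * b) := by rw [e1]
    _ = b⁻¹ * b * b := by simp only [mul_assoc]
    _ = b := Bbb

end CruxAux

private lemma natConj_refl {S : Type*} [Semigroup S] (a : S) : NatConj a a :=
  ⟨1, 1, by simp, by simp, by simp, by simp⟩

/-- In a completely regular semigroup (every element has a commuting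
inverse), natural conjugacy coincides with primary conjugacy. -/
theorem natConj_iff_primConj_of_completelyRegular {S : Type*} [Semigroup S] [Inv S]
    (hinv1 : ∀ a : S, a * a⁻¹ * a = a)
    (hinv2 : ∀ a : S, a⁻¹ * a * a⁻¹ = a⁻¹)
    (hcomm : ∀ a : S, a * a⁻¹ = a⁻¹ * a) :
    ∀ a b : S, NatConj a b ↔ PrimConj a b := by
  intro a b
  constructor
  · rintro ⟨g, h, h1, h2, h3, h4⟩
    refine ⟨g, (b : WithOne S) * h, ?_, ?_⟩
    · rw [← mul_assoc, h4]
    · rw [h2, h3]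
  · rintro ⟨u, v, hu, hv⟩
    induction u using WithOne.recOneCoe with
    | one =>
      rw [one_mul] at hu; rw [mul_one] at hv
      have hab : a = b := WithOne.coe_inj.mp (hu.trans hv.symm)
      exact hab ▸ natConj_refl a
    | coe u =>
      induction v using WithOne.recOneCoe with
      | one =>
        rw [mul_one] at hu; rw [one_mul] at hv
        have hab : a = b := WithOne.coe_inj.mp (hu.trans hv.symm)
        exact hab ▸ natConj_refl a
      | coe v =>
        rw [← WithOne.coe_mul, WithOne.coe_inj] at hu hv
        subst hu hv
        refine ⟨((u * v)⁻¹ * u : S), (v : S), ?_, ?_, ?_, ?_⟩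
        · rw [← WithOne.coe_mul, ← WithOne.coe_mul, WithOne.coe_inj]
          calc (u * v) * ((u * v)⁻¹ * u) = (u * v) * (u * v)⁻¹ * u := by
                simp only [mul_assoc]
            _ = (u * v)⁻¹ * (u * v) * u := by rw [hcomm]
            _ = (u * v)⁻¹ * u * (v * u) := by simp only [mul_assoc]
        · rw [← WithOne.coe_mul, ← WithOne.coe_mul, WithOne.coe_inj]
          simp only [mul_assoc]
        · simp only [← WithOne.coe_mul, WithOne.coe_inj]
          calc v * (u * v) * ((u * v)⁻¹ * u) = v * ((u * v) * (u * v)⁻¹) * u := by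
                simp only [mul_assoc]
            _ = v * u := crux_aux hinv1 hinv2 hcomm u v
        · simp only [← WithOne.coe_mul, WithOne.coe_inj]
          calc (u * v)⁻¹ * u * (v * u) * v = (u * v)⁻¹ * ((u * v) * (u * v)) := by
                simp only [mul_assoc]
            _ = (u * v)⁻¹ * (u * v) * (u * v) := by simp only [mul_assoc]
            _ = (u * v) * (u * v)⁻¹ * (u * v) := by rw [hcomm]
            _ = u * v := hinv1 _
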